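/- Let q be an odd prime power and let f, h ∈ F_q[X] be polynomials of degree at most 2 such that for every pair (λ, μ) ∈ F_q × F_q with (λ, μ) ≠ (0, 0) the polynomial λ·f + μ·h is not constant. Then the set A = {(f(x), h(x)) : x ∈ F_q} is a Sidon set in the additive group F_q × F_q. -/

import Mathlib

private lemma poly_deg2_expand {F : Type*} [Field F] (p : Polynomial F) (hp : p.degree ≤ 2) :
    p = Polynomial.C (p.coeff 0) + Polynomial.C (p.coeff 1) * Polynomial.X
        + Polynomial.C (p.coeff 2) * Polynomial.X ^ 2 := by
  ext n
  rcases n with _ | _ | _ | n <;>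
    simp [Polynomial.coeff_X_pow]
  apply Polynomial.coeff_eq_zero_of_degree_lt
  refine lt_of_le_of_lt hp ?_
  exact_mod_cast by omega

/-- Let `q` be an odd prime power and `f, h ∈ F_q[X]` polynomials of
degree at most 2 such that `λ·f + μ·h` is not constant for any `(λ,μ) ≠ (0,0)`.
Then `A = {(f(x), h(x)) : x ∈ F_q}` is a Sidon set in `F_q × F_q`. -/
theorem sidon_polynomial_graph {F : Type*} [Field F] [Fintype F]
    (hodd : Odd (Fintype.card F))
    (f h : Polynomial F) (hf : f.degree ≤ 2) (hh : h.degree ≤ 2)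
    (hnc : ∀ l m : F, (l, m) ≠ (0, 0) →
      ∀ c : F, Polynomial.C l * f + Polynomial.C m * h ≠ Polynomial.C c)
    (A : Set (F × F))
    (hAdef : A = {p : F × F | ∃ x : F, p = (f.eval x, h.eval x)}) :
    ∀ a ∈ A, ∀ b ∈ A, ∀ c ∈ A, ∀ d ∈ A,
      a - b = c - d → a - b ≠ 0 → a = c ∧ b = d := by
  -- characteristic is not 2
  have h2 : (2 : F) ≠ 0 := by
    intro h20
    have hdvd : ringChar F ∣ 2 := (CharP.cast_eq_zero_iff F (ringChar F) 2).mp (by exact_mod_cast h20)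
    have hne1 : ringChar F ≠ 1 := CharP.ringChar_ne_one
    have hc2 : ringChar F = 2 := by
      rcases (Nat.dvd_prime Nat.prime_two).mp hdvd with h1 | h1
      · exact absurd h1 hne1
      · exact h1
    have := (FiniteField.even_card_iff_char_two (F := F)).mp hc2
    rw [Nat.odd_iff] at hodd
    omega
  set f0 := f.coeff 0 with hf0
  set f1 := f.coeff 1 with hf1
  set f2 := f.coeff 2 with hf2
  set h0 := h.coeff 0 with hh0
  set h1 := h.coeff 1 with hh1
  set h2c := h.coeff 2 with hh2
  have hfe := poly_deg2_expand f hf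
  have hhe := poly_deg2_expand h hh
  have key : ∀ l m : F, l * f1 + m * h1 = 0 → l * f2 + m * h2c = 0 →
      Polynomial.C l * f + Polynomial.C m * h = Polynomial.C (l * f0 + m * h0) := by
    intro l m e1 e2
    rw [hfe, hhe]
    have c1 : Polynomial.C (l * f1 + m * h1) = 0 := by rw [e1, map_zero]
    have c2 : Polynomial.C (l * f2 + m * h2c) = 0 := by rw [e2, map_zero]
    simp only [map_add, map_mul] at c1 c2 ⊢
    linear_combination Polynomial.X * c1 + Polynomial.X ^ 2 * c2
  -- determinant nonzero
  have hdet : f1 * h2c - f2 * h1 ≠ 0 := by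
    intro hD
    by_cases hf1z : f1 = 0
    · by_cases hf2z : f2 = 0
      · exact hnc 1 0 (by simp) f0 (by simpa using key 1 0 (by simp [hf1z]) (by simp [hf2z]))
      · exact hnc h2c (-f2) (by simp [hf2z]) (h2c * f0 + (-f2) * h0)
          (key h2c (-f2) (by rw [hf1z] at hD ⊢; linear_combination hD) (by ring))
    · exact hnc h1 (-f1) (by simp [hf1z]) (h1 * f0 + (-f1) * h0)
        (key h1 (-f1) (by ring) (by linear_combination -hD))
  -- main argument
  intro a ha b hb c hc d hd hab hne
  rw [hAdef] at ha hb hc hd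
  obtain ⟨x, rfl⟩ := ha
  obtain ⟨y, rfl⟩ := hb
  obtain ⟨z, rfl⟩ := hc
  obtain ⟨w, rfl⟩ := hd
  rw [Prod.ext_iff] at hab
  simp only [Prod.fst_sub, Prod.snd_sub] at hab
  obtain ⟨habf, habh⟩ := hab
  have evf : ∀ t : F, f.eval t = f0 + f1 * t + f2 * t ^ 2 := by
    intro t; conv_lhs => rw [hfe]
    simp
    rfl
  have evh : ∀ t : F, h.eval t = h0 + h1 * t + h2c * t ^ 2 := by
    intro t; conv_lhs => rw [hhe]
    simp
    rfl
  rw [evf x, evf y, evf z, evf w] at habf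
  rw [evh x, evh y, evh z, evh w] at habh
  -- linear system
  have Ef : f1 * (x + w - y - z) + f2 * (x ^ 2 + w ^ 2 - y ^ 2 - z ^ 2) = 0 := by
    linear_combination habf
  have Eh : h1 * (x + w - y - z) + h2c * (x ^ 2 + w ^ 2 - y ^ 2 - z ^ 2) = 0 := by
    linear_combination habh
  have hu : x ^ 2 + w ^ 2 - y ^ 2 - z ^ 2 = 0 := by
    have h' : (f1 * h2c - f2 * h1) * (x ^ 2 + w ^ 2 - y ^ 2 - z ^ 2) = 0 := by
      linear_combination f1 * Eh - h1 * Ef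
    exact (mul_eq_zero.mp h').resolve_left hdet
  have hv : x + w - y - z = 0 := by
    have h' : (f1 * h2c - f2 * h1) * (x + w - y - z) = 0 := by
      linear_combination h2c * Ef - f2 * Eh
    exact (mul_eq_zero.mp h').resolve_left hdet
  have hp : x * w - y * z = 0 := by
    have h' : (2 : F) * (x * w - y * z) = 0 := by
      linear_combination (x + w + y + z) * hv - hu
    exact (mul_eq_zero.mp h').resolve_left h2
  have hroot : (x - y) * (x - z) = 0 := by
    linear_combination x * hv - hp
  rcases mul_eq_zero.mp hroot with hxy | hxz
  · exfalso
    apply hne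
    rw [sub_eq_zero.mp hxy]
    exact sub_self _
  · have hxz' : x = z := sub_eq_zero.mp hxz
    have hw : w = y := by linear_combination hv - hxz'
    rw [hxz', hw]
    exact ⟨rfl, rfl⟩
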